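/- For a fixed matrix Θ ∈ ℝ^{n×p} with Frobenius norm ‖Θ‖_F ≠ 0, and any matrices U ∈ ℝ^{n×p}, V ∈ ℝ^{p×p} with orthonormal columns (UᵀU = I_p and VᵀV = I_p), the sum over k = 1,…,p of (U_kᵀ Θ V_k)² / ‖Θ‖_F² is at most 1, where U_k and V_k denote the k-th columns of U and V. -/

import Mathlib

open Matrix Finset

/-- Coordinate form of Bessel's inequality for orthonormal columns. -/
lemma bessel_coords {n p : ℕ} (U : Matrix (Fin n) (Fin p) ℝ)
    (hU : Uᵀ * U = 1) (x : Fin n → ℝ) :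
    ∑ k, (∑ i, U i k * x i) ^ 2 ≤ ∑ i, (x i) ^ 2 := by
  let v : Fin p → EuclideanSpace ℝ (Fin n) := fun k => WithLp.toLp 2 (fun i => U i k)
  let x' : EuclideanSpace ℝ (Fin n) := WithLp.toLp 2 x
  have hinner : ∀ y z : EuclideanSpace ℝ (Fin n),
      (inner ℝ y z : ℝ) = ∑ i, y i * z i := by
    intro y z
    simp [PiLp.inner_apply, RCLike.inner_apply, mul_comm]
  have hv : Orthonormal ℝ v := by
    rw [orthonormal_iff_ite]
    intro k l
    have := congrFun (congrFun hU k) l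
    simp only [Matrix.mul_apply, Matrix.transpose_apply, Matrix.one_apply] at this
    rw [hinner]
    simpa [v] using this
  have hb := hv.sum_inner_products_le (𝕜 := ℝ) x'
      (s := Finset.univ)
  have hx : ‖x'‖ ^ 2 = ∑ i, (x i) ^ 2 := by
    rw [← real_inner_self_eq_norm_sq, hinner]
    simp [sq, x']
  calc ∑ k, (∑ i, U i k * x i) ^ 2
      = ∑ k, ‖(inner ℝ (v k) x' : ℝ)‖ ^ 2 := by
        apply Finset.sum_congr rfl
        intro k _
        rw [hinner, Real.norm_eq_abs, sq_abs]
    _ ≤ ‖x'‖ ^ 2 := hb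
    _ = ∑ i, (x i) ^ 2 := hx

/-- For fixed Θ with nonzero Frobenius norm and U, V with orthonormal
columns, the sum over k of (U_kᵀ Θ V_k)² / ‖Θ‖_F² is at most 1. -/
theorem pve_sum_le_one (n p : ℕ) (Θ : Matrix (Fin n) (Fin p) ℝ)
    (U : Matrix (Fin n) (Fin p) ℝ) (V : Matrix (Fin p) (Fin p) ℝ)
    (hU : Uᵀ * U = 1) (hV : Vᵀ * V = 1)
    (hΘ : (∑ i, ∑ j, (Θ i j) ^ 2) ≠ 0) :
    ∑ k, (∑ i, ∑ j, U i k * Θ i j * V j k) ^ 2 / (∑ i, ∑ j, (Θ i j) ^ 2) ≤ 1 := by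
  set S := ∑ i, ∑ j, (Θ i j) ^ 2 with hS
  have hS0 : 0 ≤ S := Finset.sum_nonneg fun i _ =>
    Finset.sum_nonneg fun j _ => sq_nonneg _
  have hSpos : 0 < S := lt_of_le_of_ne hS0 (Ne.symm hΘ)
  -- A = UᵀΘ
  set A : Matrix (Fin p) (Fin p) ℝ := fun k j => ∑ i, U i k * Θ i j with hA
  -- Step 1: ‖A‖² ≤ S
  have h1 : ∑ j, ∑ k, (A k j) ^ 2 ≤ S := by
    have hSc : S = ∑ j, ∑ i, (Θ i j) ^ 2 := Finset.sum_comm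
    rw [hSc]
    exact Finset.sum_le_sum fun j _ => bessel_coords U hU (fun i => Θ i j)
  -- Step 2: for each k, ∑_l (∑_j A k j * V j l)² ≤ ∑_j (A k j)²
  have h2 : ∀ k, ∑ l, (∑ j, V j l * A k j) ^ 2 ≤ ∑ j, (A k j) ^ 2 :=
    fun k => bessel_coords V hV (fun j => A k j)
  -- Combine
  have key : ∑ k, (∑ i, ∑ j, U i k * Θ i j * V j k) ^ 2 ≤ S := by
    have hentry : ∀ k, (∑ i, ∑ j, U i k * Θ i j * V j k)
        = ∑ j, V j k * A k j := by
      intro k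
      rw [Finset.sum_comm]
      apply Finset.sum_congr rfl
      intro j _
      rw [hA, Finset.mul_sum]
      apply Finset.sum_congr rfl
      intro i _
      ring
    calc ∑ k, (∑ i, ∑ j, U i k * Θ i j * V j k) ^ 2
        = ∑ k, (∑ j, V j k * A k j) ^ 2 := by
          exact Finset.sum_congr rfl fun k _ => by rw [hentry k]
      _ ≤ ∑ k, ∑ l, (∑ j, V j l * A k j) ^ 2 := by
          apply Finset.sum_le_sum
          intro k _
          exact Finset.single_le_sum (f := fun l => (∑ j, V j l * A k j) ^ 2)
            (fun l _ => sq_nonneg _) (Finset.mem_univ k)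
      _ ≤ ∑ k, ∑ j, (A k j) ^ 2 := Finset.sum_le_sum fun k _ => h2 k
      _ = ∑ j, ∑ k, (A k j) ^ 2 := Finset.sum_comm
      _ ≤ S := h1
  rw [← Finset.sum_div, div_le_one hSpos]
  exact key
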